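/- Let κ = (κ₁,…,κₙ) ∈ Γ_k with κ₁ ≥ κ₂ ≥ ⋯ ≥ κₙ. If κ_i ≤ 0 for some index i, then -κ_i < (n-k)κ₁/k. -/

import Mathlib

open Finset

noncomputable def E {n : ℕ} (κ : Fin n → ℝ) (m : ℕ) (s : Finset (Fin n)) : ℝ :=
  ∑ t ∈ s.powersetCard m, ∏ j ∈ t, κ j

lemma E_zero {n : ℕ} (κ : Fin n → ℝ) (s : Finset (Fin n)) : E κ 0 s = 1 := by
  simp [E]

lemma E_insert {n : ℕ} (κ : Fin n → ℝ) (m : ℕ) {s : Finset (Fin n)} {i : Fin n} (hi : i ∉ s) :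
    E κ (m + 1) (insert i s) = E κ (m + 1) s + κ i * E κ m s := by
  rw [E, powersetCard_succ_insert hi, sum_union, sum_image]
  · rw [E, E, mul_sum]
    congr 1
    refine sum_congr rfl fun t ht => ?_
    rw [mem_powersetCard] at ht
    rw [prod_insert (fun h => hi (ht.1 h))]
  · intro t ht u hu htu
    rw [mem_coe, mem_powersetCard] at ht hu
    have hit : i ∉ t := fun h => hi (ht.1 h)
    have hiu : i ∉ u := fun h => hi (hu.1 h)
    rw [← erase_insert hit, htu, erase_insert hiu]
  · rw [disjoint_left]
    intro t ht ht'
    rw [mem_powersetCard] at ht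
    rw [mem_image] at ht'
    obtain ⟨u, hu, rfl⟩ := ht'
    exact hi (ht.1 (mem_insert_self i u))

lemma E_nonneg {n : ℕ} {κ : Fin n → ℝ} {s : Finset (Fin n)} (h : ∀ j ∈ s, 0 ≤ κ j) (m : ℕ) :
    0 ≤ E κ m s := by
  refine sum_nonneg fun t ht => prod_nonneg fun j hj => ?_
  rw [mem_powersetCard] at ht
  exact h j (ht.1 hj)

lemma E_pos {n : ℕ} {κ : Fin n → ℝ} {s : Finset (Fin n)} (h : ∀ j ∈ s, 0 < κ j) {m : ℕ}
    (hm : m ≤ s.card) : 0 < E κ m s := by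
  refine sum_pos (fun t ht => prod_pos fun j hj => ?_) (powersetCard_nonempty.2 hm)
  rw [mem_powersetCard] at ht
  exact h j (ht.1 hj)

lemma E_erase {n : ℕ} (κ : Fin n → ℝ) (m : ℕ) {s : Finset (Fin n)} {i : Fin n} (hi : i ∈ s) :
    E κ (m + 1) s = E κ (m + 1) (s.erase i) + κ i * E κ m (s.erase i) := by
  conv_lhs => rw [← insert_erase hi]
  exact E_insert κ m (notMem_erase i s)

lemma E_erase_pos {n k : ℕ} {κ : Fin n → ℝ} {s : Finset (Fin n)} {i : Fin n} (hi : i ∈ s)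
    (hneg : κ i ≤ 0) (hpos : ∀ m, m ≤ k → 0 < E κ m s) :
    ∀ m, m ≤ k → 0 < E κ m (s.erase i) := by
  intro m
  induction m with
  | zero => intro _; rw [E_zero]; norm_num
  | succ m ih =>
    intro hmk
    have h1 : 0 < E κ m (s.erase i) := ih (le_of_lt (Nat.lt_of_succ_le hmk))
    have h2 := E_erase κ m hi
    nlinarith [hpos (m + 1) hmk]

lemma E_sdiff_pos {n k : ℕ} {κ : Fin n → ℝ} (B : Finset (Fin n)) (hB : ∀ j ∈ B, κ j ≤ 0)
    {s : Finset (Fin n)} (hBs : B ⊆ s) (hpos : ∀ m, m ≤ k → 0 < E κ m s) :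
    ∀ m, m ≤ k → 0 < E κ m (s \ B) := by
  induction B using Finset.induction_on with
  | empty => simpa using hpos
  | @insert j B' hj ih =>
    have hBs' : B' ⊆ s := (subset_insert j B').trans hBs
    have hB' : ∀ l ∈ B', κ l ≤ 0 := fun l hl => hB l (mem_insert_of_mem hl)
    have hstep := ih hB' hBs'
    have hjmem : j ∈ s \ B' := by
      rw [mem_sdiff]
      exact ⟨hBs (mem_insert_self j B'), hj⟩
    have : s \ insert j B' = (s \ B').erase j := by
      rw [sdiff_insert]
    rw [this]
    exact E_erase_pos hjmem (hB j (mem_insert_self j B')) hstep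

lemma sum_pairs {n : ℕ} (A : Finset (Fin n)) (k : ℕ) (f : Finset (Fin n) → ℝ) :
    ∑ s ∈ A.powersetCard (k + 1), ∑ j ∈ s, f (s.erase j)
      = ∑ t ∈ A.powersetCard k, ∑ j ∈ A \ t, f t := by
  rw [sum_sigma' (A.powersetCard (k + 1)) (fun s => s) (fun s j => f (s.erase j)),
      sum_sigma' (A.powersetCard k) (fun t => A \ t) (fun t j => f t)]
  refine sum_nbij' (fun p => ⟨p.1.erase p.2, p.2⟩) (fun p => ⟨insert p.2 p.1, p.2⟩) ?_ ?_ ?_ ?_ ?_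
  · rintro ⟨s, j⟩ hp
    rw [mem_sigma] at hp ⊢
    obtain ⟨hs, hj⟩ := hp
    rw [mem_powersetCard] at hs
    constructor
    · rw [mem_powersetCard]
      refine ⟨(erase_subset j s).trans hs.1, ?_⟩
      rw [card_erase_of_mem hj, hs.2]
      omega
    · rw [mem_sdiff]
      exact ⟨hs.1 hj, notMem_erase j s⟩
  · rintro ⟨t, j⟩ hp
    rw [mem_sigma] at hp ⊢
    obtain ⟨ht, hj⟩ := hp
    rw [mem_powersetCard] at ht
    rw [mem_sdiff] at hj
    constructor
    · rw [mem_powersetCard]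
      refine ⟨insert_subset hj.1 ht.1, ?_⟩
      rw [card_insert_of_notMem hj.2, ht.2]
    · exact mem_insert_self j t
  · rintro ⟨s, j⟩ hp
    rw [mem_sigma] at hp
    exact congrArg (fun u => (⟨u, j⟩ : (_ : Finset (Fin n)) × Fin n)) (insert_erase hp.2)
  · rintro ⟨t, j⟩ hp
    rw [mem_sigma] at hp
    have h2 := (mem_sdiff.1 hp.2).2
    exact congrArg (fun u => (⟨u, j⟩ : (_ : Finset (Fin n)) × Fin n)) (erase_insert h2)
  · rintro ⟨s, j⟩ hp
    simp

lemma E_succ_le {n : ℕ} {κ : Fin n → ℝ} {A : Finset (Fin n)} {c : ℝ}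
    (hpos : ∀ j ∈ A, 0 < κ j) (hle : ∀ j ∈ A, κ j ≤ c) (k : ℕ) :
    ((k : ℝ) + 1) * E κ (k + 1) A ≤ ((A.card - k : ℕ) : ℝ) * c * E κ k A := by
  have h1 : ((k : ℝ) + 1) * E κ (k + 1) A
      = ∑ s ∈ A.powersetCard (k + 1), ∑ j ∈ s, κ j * ∏ l ∈ s.erase j, κ l := by
    rw [E, mul_sum]
    refine sum_congr rfl fun s hs => ?_
    rw [mem_powersetCard] at hs
    rw [sum_congr rfl fun j hj => mul_prod_erase s κ hj, sum_const, hs.2, nsmul_eq_mul]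
    push_cast
    ring
  have h2 : ∑ s ∈ A.powersetCard (k + 1), ∑ j ∈ s, κ j * ∏ l ∈ s.erase j, κ l
      ≤ ∑ s ∈ A.powersetCard (k + 1), ∑ j ∈ s, c * ∏ l ∈ s.erase j, κ l := by
    refine sum_le_sum fun s hs => sum_le_sum fun j hj => ?_
    rw [mem_powersetCard] at hs
    have hprod : 0 ≤ ∏ l ∈ s.erase j, κ l :=
      prod_nonneg fun l hl => (hpos l (hs.1 (mem_of_mem_erase hl))).le
    exact mul_le_mul_of_nonneg_right (hle j (hs.1 hj)) hprod
  have h3 : ∑ s ∈ A.powersetCard (k + 1), ∑ j ∈ s, c * ∏ l ∈ s.erase j, κ l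
      = ((A.card - k : ℕ) : ℝ) * c * E κ k A := by
    rw [sum_pairs A k (fun t => c * ∏ l ∈ t, κ l), E, mul_sum]
    refine sum_congr rfl fun t ht => ?_
    rw [mem_powersetCard] at ht
    rw [sum_const, card_sdiff_of_subset ht.1, ht.2, nsmul_eq_mul]
    ring
  linarith

noncomputable def esymm (n k : ℕ) (κ : Fin n → ℝ) : ℝ :=
  ∑ s ∈ Finset.powersetCard k (Finset.univ : Finset (Fin n)), ∏ i ∈ s, κ i

noncomputable def esymm1 (n m : ℕ) (κ : Fin n → ℝ) (i : Fin n) : ℝ :=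
  ∑ s ∈ Finset.powersetCard m ((Finset.univ : Finset (Fin n)).erase i), ∏ j ∈ s, κ j

noncomputable def esymm2 (n m : ℕ) (κ : Fin n → ℝ) (i j : Fin n) : ℝ :=
  ∑ s ∈ Finset.powersetCard m (((Finset.univ : Finset (Fin n)).erase i).erase j), ∏ l ∈ s, κ l

def GardingCone (n k : ℕ) : Set (Fin n → ℝ) :=
  {κ | ∀ m, 1 ≤ m → m ≤ k → 0 < esymm n m κ}

theorem neg_entry_bound (n k : ℕ) (hk : 1 ≤ k) (hkn : k ≤ n)
    (κ : Fin n → ℝ) (hκ : κ ∈ GardingCone n k) (hdec : Antitone κ)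
    (i : Fin n) (hi : κ i ≤ 0) :
    -κ i < ((n : ℝ) - k) * κ ⟨0, by omega⟩ / k := by
  classical
  have hn : 0 < n := by omega
  set z : Fin n := ⟨0, hn⟩ with hzdef
  have hκz_le : ∀ j, κ j ≤ κ z := fun j => hdec (by simp [hzdef, Fin.le_def])
  have hpos : ∀ m, m ≤ k → 0 < E κ m (univ : Finset (Fin n)) := by
    intro m hm
    rcases Nat.eq_zero_or_pos m with h0 | h1
    · subst h0; rw [E_zero]; norm_num
    · exact hκ m h1 hm
  have hz_pos : 0 < κ z := by
    by_contra h
    push_neg at h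
    have h1 : 0 < E κ 1 (univ : Finset (Fin n)) := hpos 1 hk
    have h2 : E κ 1 (univ : Finset (Fin n)) = ∑ j, κ j := by
      rw [E, powersetCard_one, sum_map]
      simp
    have hsum : ∑ j : Fin n, κ j ≤ 0 :=
      sum_nonpos fun j _ => le_trans (hκz_le j) h
    rw [h2] at h1
    linarith
  set A : Finset (Fin n) := univ.filter (fun j => 0 < κ j) with hA
  have hiA : i ∉ A := by
    simp only [hA, mem_filter, mem_univ, true_and, not_lt]
    exact hi
  have hApos : ∀ j ∈ A, 0 < κ j := fun j hj => (mem_filter.1 hj).2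
  set B : Finset (Fin n) := univ \ insert i A with hB
  have hBneg : ∀ j ∈ B, κ j ≤ 0 := by
    intro j hj
    rw [hB, mem_sdiff] at hj
    by_contra hc
    push_neg at hc
    exact hj.2 (mem_insert_of_mem (mem_filter.2 ⟨mem_univ j, hc⟩))
  have hT : ∀ m, m ≤ k → 0 < E κ m (insert i A) := by
    have h := E_sdiff_pos B hBneg (subset_univ B) hpos
    have heq : (univ : Finset (Fin n)) \ B = insert i A := by
      rw [hB, sdiff_sdiff_right_self]
      exact inf_eq_right.2 (subset_univ _)
    rwa [heq] at h
  obtain ⟨k', rfl⟩ : ∃ k', k = k' + 1 := ⟨k - 1, by omega⟩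
  have hsplit := E_insert κ k' (s := A) hiA
  have hTk := hT (k' + 1) le_rfl
  have hk'card : k' + 1 ≤ A.card := by
    by_contra hlt
    push_neg at hlt
    have hzero : E κ (k' + 1) A = 0 := by
      rw [E, powersetCard_eq_empty.2 (by omega), sum_empty]
    have hnn : 0 ≤ E κ k' A := E_nonneg (fun j hj => (hApos j hj).le) k'
    nlinarith
  have hE' : 0 < E κ k' A := E_pos hApos (by omega)
  have hbound := E_succ_le hApos (fun j _ => hκz_le j) k'
  have hcardA : A.card ≤ n - 1 := by
    have hsub : A ⊆ univ.erase i := fun j hj => mem_erase.2 ⟨fun h => hiA (h ▸ hj), mem_univ j⟩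
    calc A.card ≤ (univ.erase i).card := card_le_card hsub
      _ = n - 1 := by rw [card_erase_of_mem (mem_univ i), card_univ, Fintype.card_fin]
  have hcast : ((A.card - k' : ℕ) : ℝ) ≤ (n : ℝ) - (↑k' + 1) := by
    have h1 : (A.card - k' : ℕ) ≤ n - (k' + 1) := by omega
    have h2 := (Nat.cast_le (α := ℝ)).2 h1
    rw [Nat.cast_sub (by omega : k' + 1 ≤ n)] at h2
    push_cast at h2 ⊢
    linarith
  have hkpos : (0 : ℝ) < (k' : ℝ) + 1 := by positivity
  have key : -κ i * ((k' : ℝ) + 1) < ((n : ℝ) - (↑k' + 1)) * κ z := by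
    have h1 : -κ i * E κ k' A < E κ (k' + 1) A := by linarith
    have h2 : ((k' : ℝ) + 1) * (-κ i * E κ k' A) < ((k' : ℝ) + 1) * E κ (k' + 1) A :=
      mul_lt_mul_of_pos_left h1 hkpos
    have h3 : (↑(#A - k') : ℝ) * κ z * E κ k' A ≤ ((n : ℝ) - (↑k' + 1)) * κ z * E κ k' A := by
      have hzE : 0 ≤ κ z * E κ k' A := by positivity
      nlinarith
    have h4 : (-κ i * ((k' : ℝ) + 1)) * E κ k' A
        < (((n : ℝ) - (↑k' + 1)) * κ z) * E κ k' A := by nlinarith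
    exact lt_of_mul_lt_mul_right h4 hE'.le
  show -κ i < ((n : ℝ) - ↑(k' + 1)) * κ z / ↑(k' + 1)
  rw [lt_div_iff₀ (by push_cast; exact hkpos)]
  push_cast
  linarith
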